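/- arXiv:0705.4590 — 3 statements merged into one kernel-verified Lean document; each statement's English description precedes it below -/
import Mathlib

section
/- Let C be an irreducible plane curve over an algebraically closed field K of characteristic zero, A ∈ K², d ∈ K*, and let B(C,A,d) ⊂ K²×K²×K be the incidence variety defined by f(y) = 0, (x₁-y₁)² + (x₂-y₂)² = d², (y₂-b)(x₁-y₁) - (y₁-a)(x₂-y₂) = 0, and w·((y₁-a)² + (y₂-b)²) = 1. If C is not the circle centered at A of radius d, then the projection π₁(x,y,w) = x has fibers of cardinality at most 2 over every point of π₁(B(C,A,d)) different from A. -/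
open MvPolynomial Set

noncomputable section

/-- Zariski closure of a subset of affine n-space over K. -/
def zarClosure (K : Type*) [Field K] (n : ℕ) (S : Set (Fin n → K)) : Set (Fin n → K) :=
  {x | ∀ p : MvPolynomial (Fin n) K, (∀ s ∈ S, eval s p = 0) → eval x p = 0}

/-- The Zariski topology on affine n-space over K. -/
instance zariskiTop (K : Type*) [Field K] (n : ℕ) : TopologicalSpace (Fin n → K) :=
  TopologicalSpace.generateFrom
    {U | ∃ p : MvPolynomial (Fin n) K, U = {x | eval x p ≠ 0}}

/-- The affine plane curve defined by a bivariate polynomial. -/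
def curveOf {K : Type*} [Field K] (f : MvPolynomial (Fin 2) K) : Set (Fin 2 → K) :=
  {y | eval y f = 0}

/-- Squared distance (w.r.t. the bilinear form x₁y₁+x₂y₂) between P and A. -/
def nSq {K : Type*} [Field K] (A P : Fin 2 → K) : K :=
  (P 0 - A 0) ^ 2 + (P 1 - A 1) ^ 2

/-- The non-isotropic locus C₀ of a set C relative to the focus A. -/
def nonIso {K : Type*} [Field K] (C : Set (Fin 2 → K)) (A : Fin 2 → K) : Set (Fin 2 → K) :=
  {P ∈ C | nSq A P ≠ 0}

/-- The incidence variety B(C,A,d) ⊆ K² × K² × K. -/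
def Inc {K : Type*} [Field K] (C : Set (Fin 2 → K)) (A : Fin 2 → K) (d : K) :
    Set ((Fin 2 → K) × (Fin 2 → K) × K) :=
  {q | q.2.1 ∈ C ∧
    (q.1 0 - q.2.1 0) ^ 2 + (q.1 1 - q.2.1 1) ^ 2 = d ^ 2 ∧
    (q.2.1 1 - A 1) * (q.1 0 - q.2.1 0) - (q.2.1 0 - A 0) * (q.1 1 - q.2.1 1) = 0 ∧
    q.2.2 * nSq A q.2.1 = 1}

/-- The conchoid of C from focus A at distance d: the Zariski closure of π₁(B(C,A,d)). -/
def conchoid {K : Type*} [Field K] (C : Set (Fin 2 → K)) (A : Fin 2 → K) (d : K) :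
    Set (Fin 2 → K) :=
  zarClosure K 2 ((fun q => q.1) '' Inc C A d)

/-- M is an irreducible component of S (w.r.t. the Zariski topology). -/
def IsCompOf {K : Type*} [Field K] {n : ℕ} (M S : Set (Fin n → K)) : Prop :=
  IsIrreducible M ∧ IsClosed M ∧ M ⊆ S ∧
    ∀ M' : Set (Fin n → K), IsIrreducible M' → M' ⊆ S → M ⊆ M' → M' = M

/-- The circle centered at A of radius r. -/
def circleAt {K : Type*} [Field K] (A : Fin 2 → K) (r : K) : Set (Fin 2 → K) :=
  {y | nSq A y = r ^ 2}

/-- C is a line through the point A. -/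
def IsLineThrough {K : Type*} [Field K] (C : Set (Fin 2 → K)) (A : Fin 2 → K) : Prop :=
  ∃ l m : K, ¬(l = 0 ∧ m = 0) ∧ C = {y | l * (y 0 - A 0) + m * (y 1 - A 1) = 0}

/-- The set of base points of C generating a point Q of the conchoid. -/
def gens {K : Type*} [Field K] (C : Set (Fin 2 → K)) (A : Fin 2 → K) (d : K)
    (Q : Fin 2 → K) : Set (Fin 2 → K) :=
  (fun q => q.2.1) '' {q ∈ Inc C A d | q.1 = Q}

/-- A component M of the conchoid of C is simple if generically each of its points
is generated by exactly one point of C. -/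
def IsSimpleComp {K : Type*} [Field K] (C : Set (Fin 2 → K)) (A : Fin 2 → K) (d : K)
    (M : Set (Fin 2 → K)) : Prop :=
  ∃ Ω : Set (Fin 2 → K), Ω.Nonempty ∧ Ω ⊆ M ∧ M ⊆ closure Ω ∧
    ∀ Q ∈ Ω, (gens C A d Q).ncard = 1

/-- A component M of the conchoid of C is special if generically each of its points
is generated by more than one point of C. -/
def IsSpecialComp {K : Type*} [Field K] (C : Set (Fin 2 → K)) (A : Fin 2 → K) (d : K)
    (M : Set (Fin 2 → K)) : Prop :=
  ∃ Ω : Set (Fin 2 → K), Ω.Nonempty ∧ Ω ⊆ M ∧ M ⊆ closure Ω ∧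
    ∀ Q ∈ Ω, 1 < (gens C A d Q).ncard

end

/-- A quadratic with nonzero leading coefficient has at most two roots. -/
lemma quad_pair {K : Type*} [Field K] (a b c : K) (ha : a ≠ 0) :
    ∃ s₁ s₂ : K, {s : K | a * s ^ 2 + b * s + c = 0} ⊆ {s₁, s₂} := by
  have key : ∀ u v : K, a * u ^ 2 + b * u + c = 0 → a * v ^ 2 + b * v + c = 0 →
      u ≠ v → a * (u + v) + b = 0 := by
    intro u v hu hv huv
    have h : (a * (u + v) + b) * (u - v) = 0 := by linear_combination hu - hv
    rcases mul_eq_zero.1 h with h | h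
    · exact h
    · exact absurd (sub_eq_zero.1 h) huv
  rcases Set.eq_empty_or_nonempty {s : K | a * s ^ 2 + b * s + c = 0} with h | ⟨s₁, hs₁⟩
  · exact ⟨0, 0, by rw [h]; exact Set.empty_subset _⟩
  by_cases h2 : ∃ s₂, a * s₂ ^ 2 + b * s₂ + c = 0 ∧ s₂ ≠ s₁
  · obtain ⟨s₂, hs₂, hne⟩ := h2
    refine ⟨s₁, s₂, fun s hs => ?_⟩
    by_cases e1 : s = s₁
    · exact Or.inl e1
    right
    have k1 := key s s₁ hs hs₁ e1
    have k2 := key s₂ s₁ hs₂ hs₁ hne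
    have h3 : a * (s - s₂) = 0 := by linear_combination k1 - k2
    rcases mul_eq_zero.1 h3 with h | h
    · exact absurd h ha
    · exact sub_eq_zero.1 h
  · push_neg at h2
    refine ⟨s₁, s₁, fun s hs => ?_⟩
    by_cases e1 : s = s₁
    · exact Or.inl e1
    · exact absurd (h2 s hs) (by simpa using e1)

theorem stmt4 {K : Type*} [Field K] [IsAlgClosed K] [CharZero K]
    (f : MvPolynomial (Fin 2) K) (hf : Irreducible f)
    (A : Fin 2 → K) (d : K) (hd : d ≠ 0)
    (hC : curveOf f ≠ circleAt A d) :
    ∀ x ∈ (fun q => q.1) '' Inc (curveOf f) A d, x ≠ A →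
      ({q ∈ Inc (curveOf f) A d | q.1 = x}).Finite ∧
      ({q ∈ Inc (curveOf f) A d | q.1 = x}).ncard ≤ 2 := by
  intro x hx hxA
  have hx2 : ¬(x 0 = A 0 ∧ x 1 = A 1) := by
    rintro ⟨h0, h1⟩
    exact hxA (funext fun i => by fin_cases i <;> assumption)
  -- notation for x - A
  -- N = squared norm of x - A
  -- Step 1: N ≠ 0, using an arbitrary point of the fiber
  have key : ∀ y : Fin 2 → K, ∀ w : K, (x, y, w) ∈ Inc (curveOf f) A d →
      (y 1 - A 1) * (x 0 - A 0) - (y 0 - A 0) * (x 1 - A 1) = 0 ∧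
      (y 0 - A 0) ^ 2 + (y 1 - A 1) ^ 2 ≠ 0 ∧
      (x 0 - y 0) ^ 2 + (x 1 - y 1) ^ 2 = d ^ 2 := by
    intro y w hq
    simp only [Inc, nSq, Set.mem_setOf_eq] at hq
    obtain ⟨-, h2, h3, h4⟩ := hq
    refine ⟨by linear_combination h3, ?_, h2⟩
    intro h0
    rw [h0, mul_zero] at h4
    exact zero_ne_one h4
  have hNne : (x 0 - A 0) ^ 2 + (x 1 - A 1) ^ 2 ≠ 0 := by
    obtain ⟨q₀, hq₀, hq₀x⟩ := hx
    obtain ⟨y, w⟩ := q₀.2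
    have hq₀' : (x, q₀.2.1, q₀.2.2) ∈ Inc (curveOf f) A d := by
      rw [← hq₀x]; exact hq₀
    obtain ⟨hcross, hu, h2⟩ := key _ _ hq₀'
    intro hN0
    set u0 := q₀.2.1 0 - A 0
    set u1 := q₀.2.1 1 - A 1
    set v0 := x 0 - A 0
    set v1 := x 1 - A 1
    have hP : (u0 * v0 + u1 * v1) ^ 2 = 0 := by
      linear_combination (u0 ^ 2 + u1 ^ 2) * hN0 - (u1 * v0 - u0 * v1) * hcross
    have hP0 : u0 * v0 + u1 * v1 = 0 := by
      exact pow_eq_zero_iff (two_ne_zero) |>.1 hP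
    have hv0 : (u0 ^ 2 + u1 ^ 2) * v0 = 0 := by
      linear_combination u0 * hP0 + u1 * hcross
    have hv1 : (u0 ^ 2 + u1 ^ 2) * v1 = 0 := by
      linear_combination u1 * hP0 - u0 * hcross
    apply hx2
    constructor
    · have := (mul_eq_zero.1 hv0).resolve_left hu
      exact sub_eq_zero.1 this
    · have := (mul_eq_zero.1 hv1).resolve_left hu
      exact sub_eq_zero.1 this
  set v0 := x 0 - A 0 with hv0def
  set v1 := x 1 - A 1 with hv1def
  set N := v0 ^ 2 + v1 ^ 2 with hNdef
  -- candidate points of the fiber, parametrized by t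
  set pt : K → (Fin 2 → K) × (Fin 2 → K) × K := fun t =>
    (x, ![A 0 + t * v0, A 1 + t * v1], (t ^ 2 * N)⁻¹) with hptdef
  obtain ⟨s₁, s₂, hpair⟩ := quad_pair N (-2 * N) (N - d ^ 2) hNne
  have hsub : {q ∈ Inc (curveOf f) A d | q.1 = x} ⊆ {pt s₁, pt s₂} := by
    rintro ⟨x', y, w⟩ ⟨hq, hq1⟩
    simp only at hq1
    obtain rfl : x = x' := hq1.symm
    obtain ⟨hcross, hu, h2⟩ := key y w hq
    set u0 := y 0 - A 0 with hu0def
    set u1 := y 1 - A 1 with hu1def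
    set t := (u0 * v0 + u1 * v1) / N with htdef
    have h5 : t * v0 = u0 := by
      rw [htdef, div_mul_eq_mul_div, div_eq_iff hNne]
      linear_combination v1 * hcross
    have h6 : t * v1 = u1 := by
      rw [htdef, div_mul_eq_mul_div, div_eq_iff hNne]
      linear_combination (-v0) * hcross
    -- the quadratic
    have hquad : N * t ^ 2 + (-2 * N) * t + (N - d ^ 2) = 0 := by
      have e0 : x 0 - y 0 = (1 - t) * v0 := by
        rw [hv0def]; linear_combination h5
      have e1 : x 1 - y 1 = (1 - t) * v1 := by
        rw [hv1def]; linear_combination h6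
      rw [e0, e1] at h2
      linear_combination h2
    have ht12 : t = s₁ ∨ t = s₂ := hpair hquad
    -- identify (x, y, w) = pt t
    have hy : y = ![A 0 + t * v0, A 1 + t * v1] := by
      funext i
      fin_cases i
      · show y 0 = ![A 0 + t * v0, A 1 + t * v1] 0
        simp only [Matrix.cons_val_zero]
        linear_combination -h5
      · show y 1 = ![A 0 + t * v0, A 1 + t * v1] 1
        simp only [Matrix.cons_val_one, Matrix.head_cons, Matrix.cons_val_zero]
        linear_combination -h6
    have hnsq : u0 ^ 2 + u1 ^ 2 = t ^ 2 * N := by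
      linear_combination (-(t * v0) - u0) * h5 + (-(t * v1) - u1) * h6
    have hw : w = (t ^ 2 * N)⁻¹ := by
      have h4 : w * nSq A y = 1 := hq.2.2.2
      unfold nSq at h4
      have h4' : w * (t ^ 2 * N) = 1 := by
        linear_combination h4 - w * hnsq
      exact eq_inv_of_mul_eq_one_left h4'
    have hqe : (x, y, w) = pt t := by
      rw [hptdef]
      simp only [Prod.mk.injEq]
      exact ⟨trivial, hy, hw⟩
    rcases ht12 with rfl | rfl
    · exact Or.inl hqe
    · exact Or.inr hqe
  have hfin : ({pt s₁, pt s₂} : Set _).Finite := (Set.finite_singleton _).insert _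
  refine ⟨hfin.subset hsub, ?_⟩
  calc ({q ∈ Inc (curveOf f) A d | q.1 = x}).ncard
      ≤ ({pt s₁, pt s₂} : Set _).ncard := Set.ncard_le_ncard hsub hfin
    _ ≤ 2 := by
        refine (Set.ncard_insert_le _ _).trans ?_
        simp [Set.ncard_singleton]
end

section
/- If C is the circle centered at the focus A of radius d, then the conchoid C(C,A,d) is the union of the singleton {A} and the circle centered at A of radius 2d. -/
open MvPolynomial Set

theorem stmt9 {K : Type*} [Field K] [IsAlgClosed K] [CharZero K]
    (A : Fin 2 → K) (d : K) (hd : d ≠ 0) :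
    conchoid (circleAt A d) A d = {A} ∪ circleAt A (2 * d) := by
  have hd2 : d ^ 2 ≠ 0 := pow_ne_zero _ hd
  -- Step 1: the image of the incidence variety is exactly {A} ∪ circle(A, 2d)
  have himg : (fun q => q.1) '' Inc (circleAt A d) A d
      = ({A} ∪ circleAt A (2 * d) : Set (Fin 2 → K)) := by
    ext x
    simp only [Set.mem_image, Set.mem_union, Set.mem_singleton_iff]
    constructor
    · rintro ⟨⟨x', y, t⟩, hq, rfl⟩
      simp only [Inc, Set.mem_setOf_eq] at hq
      obtain ⟨hy, hdist, hcol, ht⟩ := hq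
      have hy' : (y 0 - A 0) ^ 2 + (y 1 - A 1) ^ 2 = d ^ 2 := hy
      have hfac : ((y 0 - A 0) * (x' 0 - y 0) + (y 1 - A 1) * (x' 1 - y 1) - d ^ 2) *
          ((y 0 - A 0) * (x' 0 - y 0) + (y 1 - A 1) * (x' 1 - y 1) + d ^ 2) = 0 := by
        linear_combination ((x' 0 - y 0) ^ 2 + (x' 1 - y 1) ^ 2) * hy' + d ^ 2 * hdist -
          ((y 1 - A 1) * (x' 0 - y 0) - (y 0 - A 0) * (x' 1 - y 1)) * hcol
      rcases mul_eq_zero.mp hfac with hs | hs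
      · right
        show (x' 0 - A 0) ^ 2 + (x' 1 - A 1) ^ 2 = (2 * d) ^ 2
        linear_combination hy' + hdist + 2 * hs
      · left
        have h0 : d ^ 2 * (x' 0 - A 0) = 0 := by
          linear_combination (y 0 - A 0) * hs + (y 1 - A 1) * hcol - (x' 0 - y 0) * hy'
        have h1 : d ^ 2 * (x' 1 - A 1) = 0 := by
          linear_combination (y 1 - A 1) * hs - (y 0 - A 0) * hcol - (x' 1 - y 1) * hy'
        have e0 : x' 0 = A 0 := sub_eq_zero.mp ((mul_eq_zero.mp h0).resolve_left hd2)
        have e1 : x' 1 = A 1 := sub_eq_zero.mp ((mul_eq_zero.mp h1).resolve_left hd2)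
        funext i
        fin_cases i
        · exact e0
        · exact e1
    · rintro (h | hx)
      · rw [h]
        refine ⟨(A, ![A 0 + d, A 1], (d ^ 2)⁻¹), ⟨?_, ?_, ?_, ?_⟩, rfl⟩
        · show nSq A ![A 0 + d, A 1] = d ^ 2
          simp [nSq]
        · simp
        · simp
        · show (d ^ 2)⁻¹ * nSq A ![A 0 + d, A 1] = 1
          have hn : nSq A ![A 0 + d, A 1] = d ^ 2 := by simp [nSq]
          rw [hn]
          exact inv_mul_cancel₀ hd2
      · have hx' : (x 0 - A 0) ^ 2 + (x 1 - A 1) ^ 2 = (2 * d) ^ 2 := hx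
        refine ⟨(x, fun i => (x i + A i) / 2, (d ^ 2)⁻¹), ⟨?_, ?_, ?_, ?_⟩, rfl⟩
        · show ((x 0 + A 0) / 2 - A 0) ^ 2 + ((x 1 + A 1) / 2 - A 1) ^ 2 = d ^ 2
          linear_combination hx' / 4
        · show (x 0 - (x 0 + A 0) / 2) ^ 2 + (x 1 - (x 1 + A 1) / 2) ^ 2 = d ^ 2
          linear_combination hx' / 4
        · show ((x 1 + A 1) / 2 - A 1) * (x 0 - (x 0 + A 0) / 2) -
            ((x 0 + A 0) / 2 - A 0) * (x 1 - (x 1 + A 1) / 2) = 0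
          ring
        · show (d ^ 2)⁻¹ * nSq A (fun i => (x i + A i) / 2) = 1
          have : nSq A (fun i => (x i + A i) / 2) = d ^ 2 := by
            show ((x 0 + A 0) / 2 - A 0) ^ 2 + ((x 1 + A 1) / 2 - A 1) ^ 2 = d ^ 2
            linear_combination hx' / 4
          rw [this]
          exact inv_mul_cancel₀ hd2
  -- Step 2: {A} ∪ circle(A, 2d) is Zariski closed
  rw [conchoid, himg]
  apply Set.Subset.antisymm
  · intro x hx
    have key : ∀ i : Fin 2, (x i - A i) * ((x 0 - A 0) ^ 2 + (x 1 - A 1) ^ 2 - (2 * d) ^ 2) = 0 := by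
      intro i
      have hvan : ∀ s ∈ ({A} ∪ circleAt A (2 * d) : Set (Fin 2 → K)),
          eval s ((X i - C (A i)) *
            ((X 0 - C (A 0)) ^ 2 + (X 1 - C (A 1)) ^ 2 - C ((2 * d) ^ 2))) = 0 := by
        rintro s (rfl | hs)
        · simp
        · have hcirc : (s 0 - A 0) ^ 2 + (s 1 - A 1) ^ 2 = (2 * d) ^ 2 := hs
          simp only [map_mul, map_sub, map_add, map_pow, eval_X, eval_C]
          rw [hcirc, sub_self, mul_zero]
      have := hx _ hvan
      simpa using this
    by_cases hc : (x 0 - A 0) ^ 2 + (x 1 - A 1) ^ 2 = (2 * d) ^ 2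
    · exact Or.inr hc
    · left
      have e : ∀ i : Fin 2, x i = A i := fun i =>
        sub_eq_zero.mp ((mul_eq_zero.mp (key i)).resolve_right (sub_ne_zero.mpr hc))
      exact funext e
  · intro x hx p hp
    exact hp x hx
end

section
/- Let C be an irreducible plane curve with C₀ ≠ ∅, not the circle centered at A of radius d. Then the conchoid C(C,A,d) has at most two irreducible components. -/
open MvPolynomial Set

noncomputable section ConchoidAux

variable {K : Type*} [Field K] {n : ℕ}

lemma zar_basic_open (p : MvPolynomial (Fin n) K) : IsOpen {x : Fin n → K | eval x p ≠ 0} :=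
  TopologicalSpace.GenerateOpen.basic _ ⟨p, rfl⟩

lemma zar_mem_basis {U : Set (Fin n → K)} (hU : IsOpen U) :
    ∀ x ∈ U, ∃ p : MvPolynomial (Fin n) K, eval x p ≠ 0 ∧ {y | eval y p ≠ 0} ⊆ U := by
  have h : TopologicalSpace.GenerateOpen
      {U | ∃ p : MvPolynomial (Fin n) K, U = {x | eval x p ≠ 0}} U := hU
  clear hU
  induction h with
  | basic V hV =>
    rcases hV with ⟨p, rfl⟩
    exact fun x hx => ⟨p, hx, fun y hy => hy⟩
  | univ => exact fun x _ => ⟨1, by simp, fun y _ => trivial⟩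
  | inter U V hU hV ihU ihV =>
    intro x hx
    obtain ⟨p, hp, hps⟩ := ihU x hx.1
    obtain ⟨q, hq, hqs⟩ := ihV x hx.2
    refine ⟨p * q, by simp [mul_ne_zero hp hq], fun y hy => ?_⟩
    simp only [Set.mem_setOf_eq, map_mul, mul_ne_zero_iff] at hy
    exact ⟨hps hy.1, hqs hy.2⟩
  | sUnion S hS ih =>
    intro x hx
    obtain ⟨t, htS, hxt⟩ := hx
    obtain ⟨p, hp, hps⟩ := ih t htS x hxt
    exact ⟨p, hp, hps.trans (Set.subset_sUnion_of_mem htS)⟩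

lemma zar_isClosed_zeroLocus (I : Ideal (MvPolynomial (Fin n) K)) :
    IsClosed (zeroLocus K I) := by
  rw [← isOpen_compl_iff]
  have : (zeroLocus K I)ᶜ = ⋃ p ∈ I, {x : Fin n → K | eval x p ≠ 0} := by
    ext x
    simp only [Set.mem_compl_iff, mem_zeroLocus_iff, aeval_eq_eval, Set.mem_iUnion, Set.mem_setOf_eq]
    push_neg
    tauto
  rw [this]
  exact isOpen_biUnion fun p _ => zar_basic_open p

lemma zar_irr [IsAlgClosed K] (P : Ideal (MvPolynomial (Fin n) K)) (hP : P.IsPrime) :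
    IsIrreducible (zeroLocus K P) := by
  haveI := hP
  have hrad : vanishingIdeal K (zeroLocus K P) = P := MvPolynomial.IsPrime.vanishingIdeal_zeroLocus P
  constructor
  · by_contra hne
    rw [Set.not_nonempty_iff_eq_empty] at hne
    rw [hne, vanishingIdeal_empty] at hrad
    exact hP.ne_top hrad.symm
  · rintro u v hu hv ⟨x, hxZ, hxu⟩ ⟨y, hyZ, hyv⟩
    obtain ⟨p, hp, hps⟩ := zar_mem_basis hu x hxu
    obtain ⟨q, hq, hqs⟩ := zar_mem_basis hv y hyv
    have hpP : p ∉ P := fun h => hp (hxZ p h)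
    have hqP : q ∉ P := fun h => hq (hyZ q h)
    have hpq : p * q ∉ vanishingIdeal K (zeroLocus K P) := by
      rw [hrad]
      intro h
      rcases hP.mem_or_mem h with h' | h'
      exacts [hpP h', hqP h']
    rw [mem_vanishingIdeal_iff] at hpq
    push_neg at hpq
    obtain ⟨z, hzZ, hz⟩ := hpq
    rw [map_mul, mul_ne_zero_iff] at hz
    exact ⟨z, hzZ, hps hz.1, hqs hz.2⟩

lemma zar_closure_eq (S : Set (Fin n → K)) :
    zarClosure K n S = zeroLocus K (vanishingIdeal K S) := by
  ext x
  exact ⟨fun h p hp => h p hp, fun h p hp => h p hp⟩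

lemma zar_zeroLocus_inf (I J : Ideal (MvPolynomial (Fin n) K)) :
    zeroLocus K (I ⊓ J) = zeroLocus K I ∪ zeroLocus K J := by
  apply subset_antisymm
  · intro x hx
    by_contra hx'
    simp only [Set.mem_union, mem_zeroLocus_iff, not_or, not_forall] at hx'
    obtain ⟨⟨p, hpI, hpx⟩, ⟨q, hqJ, hqx⟩⟩ := hx'
    have : p * q ∈ I ⊓ J :=
      ⟨Ideal.mul_mem_right _ _ hpI, Ideal.mul_mem_left _ _ hqJ⟩
    have := hx _ this
    rw [map_mul] at this
    exact (mul_ne_zero hpx hqx) this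
  · rintro x (hx | hx) p hp
    · exact hx p hp.1
    · exact hx p hp.2


variable {K : Type*} [Field K]

/-- the squared-distance polynomial -/
def nPoly (A : Fin 2 → K) : MvPolynomial (Fin 2) K :=
  (X 0 - C (A 0)) ^ 2 + (X 1 - C (A 1)) ^ 2

lemma eval_nPoly (A P : Fin 2 → K) :
    eval P (nPoly A) = (P 0 - A 0) ^ 2 + (P 1 - A 1) ^ 2 := by
  simp [nPoly]

lemma nPoly_ne_zero (A : Fin 2 → K) : nPoly A ≠ 0 := by
  intro h
  have := congrArg (eval ![A 0 + 1, A 1]) h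
  rw [eval_nPoly] at this
  simp at this

/-- the quadratic G = n·X² − d² in (K[x,y])[X] -/
def Gq (A : Fin 2 → K) (d : K) : Polynomial (MvPolynomial (Fin 2) K) :=
  Polynomial.C (nPoly A) * Polynomial.X ^ 2 - Polynomial.C (C (d ^ 2))

/-- the incidence curve upstairs -/
def Ecurve (f : MvPolynomial (Fin 2) K) (A : Fin 2 → K) (d : K) : Set (K × (Fin 2 → K)) :=
  {z | eval z.2 f = 0 ∧ eval z.2 (nPoly A) * z.1 ^ 2 = d ^ 2}

def phiMap (A : Fin 2 → K) (z : K × (Fin 2 → K)) : Fin 2 → K :=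
  fun i => z.2 i + z.1 * (z.2 i - A i)

/-- evaluation of elements of (K[x,y])[X] at a point (t, P) -/
def ev2 (z : K × (Fin 2 → K)) : Polynomial (MvPolynomial (Fin 2) K) →+* K :=
  Polynomial.eval₂RingHom (MvPolynomial.eval z.2) z.1

@[simp] lemma ev2_C (z : K × (Fin 2 → K)) (p : MvPolynomial (Fin 2) K) :
    ev2 z (Polynomial.C p) = eval z.2 p := Polynomial.eval₂_C _ _

@[simp] lemma ev2_X (z : K × (Fin 2 → K)) : ev2 z Polynomial.X = z.1 :=
  Polynomial.eval₂_X _ _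

lemma ev2_Gq (A : Fin 2 → K) (d : K) (z : K × (Fin 2 → K)) :
    ev2 z (Gq A d) = eval z.2 (nPoly A) * z.1 ^ 2 - d ^ 2 := by
  simp [Gq]

/-- pseudo-division by G -/
lemma key1 (A : Fin 2 → K) (d : K) (h : Polynomial (MvPolynomial (Fin 2) K)) :
    ∃ (N : ℕ) (q : Polynomial (MvPolynomial (Fin 2) K)) (a b : MvPolynomial (Fin 2) K),
      (Polynomial.C (nPoly A)) ^ N * h =
        Gq A d * q + Polynomial.C a + Polynomial.C b * Polynomial.X := by
  suffices H : ∀ (m : ℕ) (h : Polynomial (MvPolynomial (Fin 2) K)), h.natDegree ≤ m →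
      ∃ (N : ℕ) (q : Polynomial (MvPolynomial (Fin 2) K)) (a b : MvPolynomial (Fin 2) K),
      (Polynomial.C (nPoly A)) ^ N * h =
        Gq A d * q + Polynomial.C a + Polynomial.C b * Polynomial.X from H _ h le_rfl
  intro m
  induction m using Nat.strong_induction_on with
  | _ m IH =>
    intro h hdeg
    by_cases hle : h.natDegree ≤ 1
    · refine ⟨0, 0, h.coeff 0, h.coeff 1, ?_⟩
      have hh := Polynomial.eq_X_add_C_of_degree_le_one
        (Polynomial.natDegree_le_iff_degree_le.mp hle)
      rw [pow_zero, one_mul, mul_zero, zero_add]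
      conv_lhs => rw [hh]
      ring
    · push_neg at hle
      obtain ⟨k, hk⟩ : ∃ k, h.natDegree = k + 2 := ⟨h.natDegree - 2, by omega⟩
      set n := nPoly A with hn
      set lead := h.leadingCoeff with hlead
      set h' := Polynomial.C n * h - Polynomial.C lead * Polynomial.X ^ k * Gq A d with hh'
      have hexp : Polynomial.C lead * Polynomial.X ^ k * Gq A d =
          Polynomial.C (lead * n) * Polynomial.X ^ (k + 2)
            - Polynomial.C (lead * C (d ^ 2)) * Polynomial.X ^ k := by
        simp only [Gq, map_mul]
        ring
      have hcoeff : ∀ N, k + 1 < N → h'.coeff N = 0 := by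
        intro N hN
        rw [hh', hexp]
        simp only [Polynomial.coeff_sub, Polynomial.coeff_C_mul, Polynomial.coeff_X_pow]
        rcases eq_or_lt_of_le (show k + 2 ≤ N by omega) with hNe | hNl
        · rw [← hNe]
          rw [show h.coeff (k+2) = lead by rw [← hk]; exact Polynomial.coeff_natDegree]
          simp [show ¬ (k + 2 = k) by omega]
          ring
        · rw [Polynomial.coeff_eq_zero_of_natDegree_lt (by omega)]
          simp [show ¬ (N = k + 2) by omega, show ¬ (N = k) by omega]
      have hdeg' : h'.natDegree ≤ k + 1 := Polynomial.natDegree_le_iff_coeff_eq_zero.mpr hcoeff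
      obtain ⟨N, q, a, b, hid⟩ := IH (k + 1) (by omega) h' hdeg'
      refine ⟨N + 1, q + (Polynomial.C n) ^ N * (Polynomial.C lead * Polynomial.X ^ k), a, b, ?_⟩
      have : (Polynomial.C n) ^ (N + 1) * h = (Polynomial.C n) ^ N * h'
          + (Polynomial.C n) ^ N * (Polynomial.C lead * Polynomial.X ^ k * Gq A d) := by
        rw [hh']; ring
      rw [this, hid]; ring

/-- Nullstellensatz consequence: polynomials vanishing on the curve are multiples of f. -/
lemma curve_vanish [IsAlgClosed K] {f : MvPolynomial (Fin 2) K} (hfp : Prime f)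
    (a : MvPolynomial (Fin 2) K) (ha : ∀ P : Fin 2 → K, eval P f = 0 → eval P a = 0) :
    f ∣ a := by
  have hZ : zeroLocus K (Ideal.span {f}) = {P : Fin 2 → K | eval P f = 0} := by
    ext x
    simp only [mem_zeroLocus_iff, aeval_eq_eval, Set.mem_setOf_eq]
    constructor
    · intro h
      exact h f (Ideal.subset_span rfl)
    · intro h p hp
      obtain ⟨c, rfl⟩ := Ideal.mem_span_singleton.mp hp
      rw [map_mul, h, zero_mul]
  haveI hPr : (Ideal.span {f} : Ideal (MvPolynomial (Fin 2) K)).IsPrime :=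
    (Ideal.span_singleton_prime hfp.ne_zero).mpr hfp
  have hvan : vanishingIdeal K {P : Fin 2 → K | eval P f = 0} = Ideal.span {f} := by
    rw [← hZ, MvPolynomial.IsPrime.vanishingIdeal_zeroLocus]
  have : a ∈ vanishingIdeal K {P : Fin 2 → K | eval P f = 0} :=
    mem_vanishingIdeal_iff.mpr fun x hx => ha x hx
  rw [hvan, Ideal.mem_span_singleton] at this
  exact this

/-- key step: a generically-vanishing linear remainder is divisible by f. -/
lemma lin_vanish [IsAlgClosed K] [CharZero K] {f : MvPolynomial (Fin 2) K} (hfp : Prime f)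
    {A : Fin 2 → K} {d : K} (hd : d ≠ 0) (hfn : ¬ f ∣ nPoly A)
    (a b : MvPolynomial (Fin 2) K)
    (hab : ∀ z ∈ Ecurve f A d, eval z.2 a + eval z.2 b * z.1 = 0) :
    f ∣ a ∧ f ∣ b := by
  have key : ∀ P : Fin 2 → K, eval P f = 0 → eval P (nPoly A) ≠ 0 →
      eval P a = 0 ∧ eval P b = 0 := by
    intro P hPf hPn
    obtain ⟨t, ht⟩ := IsAlgClosed.exists_pow_nat_eq (k := K)
      (d ^ 2 / eval P (nPoly A)) (n := 2) (by norm_num)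
    have hnt : eval P (nPoly A) * t ^ 2 = d ^ 2 := by
      rw [ht]; field_simp
    have ht0 : t ≠ 0 := by
      intro h
      rw [h] at hnt
      simp at hnt
      exact (pow_ne_zero 2 hd) hnt.symm
    have e1 := hab (t, P) ⟨hPf, hnt⟩
    have e2 := hab (-t, P) ⟨hPf, by rw [neg_pow]; simpa using hnt⟩
    simp only at e1 e2
    have hb : eval P b = 0 := by
      have h2 : eval P b * (2 * t) = 0 := by linear_combination e1 - e2
      rcases mul_eq_zero.mp h2 with h | h
      · exact h
      · exact absurd h (by simp [ht0])
    refine ⟨?_, hb⟩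
    rw [hb, zero_mul, add_zero] at e1
    exact e1
  have hna : f ∣ nPoly A * a := by
    apply curve_vanish hfp
    intro P hP
    by_cases hn : eval P (nPoly A) = 0
    · rw [map_mul, hn, zero_mul]
    · rw [map_mul, (key P hP hn).1, mul_zero]
  have hnb : f ∣ nPoly A * b := by
    apply curve_vanish hfp
    intro P hP
    by_cases hn : eval P (nPoly A) = 0
    · rw [map_mul, hn, zero_mul]
    · rw [map_mul, (key P hP hn).2, mul_zero]
  exact ⟨(hfp.dvd_or_dvd hna).resolve_left hfn, (hfp.dvd_or_dvd hnb).resolve_left hfn⟩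

/-- MAIN: vanishing on E is equivalent to divisibility by G over the function field. -/
lemma main_dvd [IsAlgClosed K] [CharZero K] {F : Type*} [Field F]
    (ρ : MvPolynomial (Fin 2) K →+* F)
    {f : MvPolynomial (Fin 2) K} (hfp : Prime f)
    (hker : ∀ p, ρ p = 0 ↔ f ∣ p)
    {A : Fin 2 → K} {d : K} (hd : d ≠ 0)
    (hfn : ¬ f ∣ nPoly A)
    (h : Polynomial (MvPolynomial (Fin 2) K)) :
    (∀ z ∈ Ecurve f A d, ev2 z h = 0) ↔
      (Gq A d).map ρ ∣ h.map ρ := by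
  have hν : ρ (nPoly A) ≠ 0 := fun hz => hfn ((hker _).mp hz)
  obtain ⟨N, q, a, b, hid⟩ := key1 A d h
  have hGmap : (Gq A d).map ρ = Polynomial.C (ρ (nPoly A)) * Polynomial.X ^ 2
      - Polynomial.C (ρ (C (d ^ 2))) := by
    simp [Gq]
  have hGdeg : ((Gq A d).map ρ).natDegree = 2 := by
    rw [hGmap, Polynomial.natDegree_sub_C, Polynomial.natDegree_C_mul hν,
      Polynomial.natDegree_X_pow]
  have hGne : (Gq A d).map ρ ≠ 0 := fun hz => by simp [hz] at hGdeg
  have hidF : (Polynomial.C (ρ (nPoly A))) ^ N * h.map ρ =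
      (Gq A d).map ρ * q.map ρ + Polynomial.C (ρ a) + Polynomial.C (ρ b) * Polynomial.X := by
    have := congrArg (Polynomial.map ρ) hid
    simpa [Polynomial.map_mul, Polynomial.map_add, Polynomial.map_pow] using this
  have hu : IsUnit ((Polynomial.C (ρ (nPoly A)) : Polynomial F) ^ N) :=
    (Polynomial.isUnit_C.mpr (isUnit_iff_ne_zero.mpr hν)).pow N
  constructor
  · intro hvan
    have hab : ∀ z ∈ Ecurve f A d, eval z.2 a + eval z.2 b * z.1 = 0 := by
      intro z hz
      have := congrArg (ev2 z) hid
      simp only [map_mul, map_add, map_pow, ev2_C, ev2_X] at this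
      rw [hvan z hz, mul_zero] at this
      rw [show ev2 z (Gq A d) = 0 by rw [ev2_Gq, hz.2, sub_self], zero_mul, zero_add] at this
      exact this.symm
    obtain ⟨ha, hb⟩ := lin_vanish hfp hd hfn a b hab
    rw [(hker a).mpr ha, (hker b).mpr hb] at hidF
    simp only [map_zero, add_zero, zero_mul] at hidF
    have hdvd : (Gq A d).map ρ ∣ (Polynomial.C (ρ (nPoly A))) ^ N * h.map ρ :=
      ⟨q.map ρ, hidF⟩
    obtain ⟨u, hu'⟩ := hu
    have : h.map ρ = ↑u⁻¹ * ((Polynomial.C (ρ (nPoly A))) ^ N * h.map ρ) := by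
      rw [← mul_assoc, ← hu', Units.inv_mul, one_mul]
    rw [this]
    exact hdvd.mul_left _
  · intro hdvd z hz
    have hw : (Gq A d).map ρ ∣ Polynomial.C (ρ a) + Polynomial.C (ρ b) * Polynomial.X := by
      have h2 : Polynomial.C (ρ a) + Polynomial.C (ρ b) * Polynomial.X
          = (Polynomial.C (ρ (nPoly A))) ^ N * h.map ρ - (Gq A d).map ρ * q.map ρ := by
        rw [hidF]; ring
      rw [h2]
      exact dvd_sub (hdvd.mul_left _) (dvd_mul_right _ _)
    obtain ⟨c, hc⟩ := hw
    have hc0 : c = 0 := by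
      by_contra hcne
      have hdegs : ((Gq A d).map ρ * c).natDegree = 2 + c.natDegree := by
        rw [Polynomial.natDegree_mul hGne hcne, hGdeg]
      have hle : (Polynomial.C (ρ a) + Polynomial.C (ρ b) * Polynomial.X).natDegree ≤ 1 := by
        apply le_trans (Polynomial.natDegree_add_le _ _)
        simp only [Polynomial.natDegree_C, max_le_iff]
        exact ⟨Nat.zero_le _, le_trans (Polynomial.natDegree_mul_le)
          (by simp [Polynomial.natDegree_X_le])⟩
      rw [hc, hdegs] at hle
      omega
    rw [hc0, mul_zero] at hc
    have hcoe0 : ρ a = 0 := by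
      have := congrArg (fun w => Polynomial.coeff w 0) hc
      simpa using this
    have hcoe1 : ρ b = 0 := by
      have := congrArg (fun w => Polynomial.coeff w 1) hc
      simpa using this
    obtain ⟨a', rfl⟩ := (hker a).mp hcoe0
    obtain ⟨b', rfl⟩ := (hker b).mp hcoe1
    have := congrArg (ev2 z) hid
    simp only [map_mul, map_add, map_pow, ev2_C, ev2_X] at this
    rw [show ev2 z (Gq A d) = 0 by rw [ev2_Gq, hz.2, sub_self], zero_mul, zero_add] at this
    rw [show eval z.2 f = 0 from hz.1] at this
    simp only [zero_mul, add_zero, zero_add] at this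
    have hn0 : eval z.2 (nPoly A) ≠ 0 := by
      intro hzz
      have h2 := hz.2
      rw [hzz, zero_mul] at h2
      exact (pow_ne_zero 2 hd) h2.symm
    rcases mul_eq_zero.mp this with h' | h'
    · exact absurd h' (pow_ne_zero N hn0)
    · exact h'


lemma quad_prime {F : Type*} [Field F] {v e2 : F} (hv : v ≠ 0)
    (hsq : ∀ t : F, v * t ^ 2 ≠ e2) :
    Prime (Polynomial.C v * Polynomial.X ^ 2 - Polynomial.C e2) := by
  set G : Polynomial F := Polynomial.C v * Polynomial.X ^ 2 - Polynomial.C e2 with hGdef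
  have hGdeg : G.natDegree = 2 := by
    rw [hGdef, Polynomial.natDegree_sub_C, Polynomial.natDegree_C_mul hv,
      Polynomial.natDegree_X_pow]
  have hGne : G ≠ 0 := fun hz => by simp [hz] at hGdeg
  have hGirr : Irreducible G := by
    constructor
    · intro hu
      have := Polynomial.natDegree_eq_zero_of_isUnit hu
      rw [hGdeg] at this
      exact two_ne_zero this
    · intro a b hab
      have ha0 : a ≠ 0 := fun h => hGne (by rw [hab, h, zero_mul])
      have hb0 : b ≠ 0 := fun h => hGne (by rw [hab, h, mul_zero])
      have hdegs : a.natDegree + b.natDegree = 2 := by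
        rw [← Polynomial.natDegree_mul ha0 hb0, ← hab, hGdeg]
      rcases Nat.lt_or_ge a.natDegree 1 with h1 | h1
      · left
        rw [Polynomial.eq_C_of_natDegree_eq_zero (show a.natDegree = 0 by omega)]
        refine Polynomial.isUnit_C.mpr (isUnit_iff_ne_zero.mpr ?_)
        intro h
        apply ha0
        rw [Polynomial.eq_C_of_natDegree_eq_zero (show a.natDegree = 0 by omega), h, map_zero]
      rcases Nat.lt_or_ge b.natDegree 1 with h2 | h2
      · right
        rw [Polynomial.eq_C_of_natDegree_eq_zero (show b.natDegree = 0 by omega)]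
        refine Polynomial.isUnit_C.mpr (isUnit_iff_ne_zero.mpr ?_)
        intro h
        apply hb0
        rw [Polynomial.eq_C_of_natDegree_eq_zero (show b.natDegree = 0 by omega), h, map_zero]
      exfalso
      have ha1 : a.natDegree = 1 := by omega
      have haeq := Polynomial.eq_X_add_C_of_degree_le_one
        (Polynomial.natDegree_le_iff_degree_le.mp (le_of_eq ha1))
      have hlc : a.coeff 1 ≠ 0 := by
        have := Polynomial.leadingCoeff_ne_zero.mpr ha0
        rwa [Polynomial.leadingCoeff, ha1] at this
      set r : F := -(a.coeff 0) / (a.coeff 1) with hrdef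
      have haroot : Polynomial.eval r a = 0 := by
        conv_lhs => rw [haeq]
        simp only [Polynomial.eval_add, Polynomial.eval_mul, Polynomial.eval_C,
          Polynomial.eval_X, hrdef]
        field_simp
        ring
      have hGroot : Polynomial.eval r G = 0 := by
        rw [hab, Polynomial.eval_mul, haroot, zero_mul]
      rw [hGdef] at hGroot
      simp only [Polynomial.eval_sub, Polynomial.eval_mul, Polynomial.eval_pow,
        Polynomial.eval_C, Polynomial.eval_X] at hGroot
      exact hsq r (by linear_combination hGroot)
  exact UniqueFactorizationMonoid.irreducible_iff_prime.mp hGirr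

/-- substitution homomorphism: x_i ↦ x_i + X·(x_i − A_i) -/
def Phi (A : Fin 2 → K) : MvPolynomial (Fin 2) K →+* Polynomial (MvPolynomial (Fin 2) K) :=
  MvPolynomial.eval₂Hom (Polynomial.C.comp MvPolynomial.C)
    (fun i => Polynomial.C (X i) + Polynomial.X * Polynomial.C (X i - C (A i)))

lemma ev2_Phi (A : Fin 2 → K) (z : K × (Fin 2 → K)) (p : MvPolynomial (Fin 2) K) :
    ev2 z (Phi A p) = eval (phiMap A z) p := by
  have h : (ev2 z).comp (Phi A) = (eval (phiMap A z) : MvPolynomial (Fin 2) K →+* K) := by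
    apply MvPolynomial.ringHom_ext
    · intro r
      simp [Phi, ev2]
    · intro i
      simp [Phi, phiMap, ev2]
  exact DFunLike.congr_fun h p

lemma nSq_eq_eval (A P : Fin 2 → K) : nSq A P = eval P (nPoly A) := by
  rw [eval_nPoly, nSq]

lemma image_eq {f : MvPolynomial (Fin 2) K} {A : Fin 2 → K} {d : K} (hd : d ≠ 0) :
    (fun q => q.1) '' Inc (curveOf f) A d = phiMap A '' Ecurve f A d := by
  ext Q
  constructor
  · rintro ⟨⟨Q', P, z⟩, hmem, rfl⟩
    obtain ⟨hPC, hdist, hcol, hz⟩ := hmem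
    simp only at hdist hcol hz ⊢
    have hn : nSq A P ≠ 0 := fun h => by rw [h, mul_zero] at hz; exact zero_ne_one hz
    have build : ∀ t : K, Q' 0 - P 0 = t * (P 0 - A 0) → Q' 1 - P 1 = t * (P 1 - A 1) →
        Q' ∈ phiMap A '' Ecurve f A d := by
      intro t hu0 hu1
      refine ⟨(t, P), ⟨hPC, ?_⟩, ?_⟩
      · rw [eval_nPoly]
        linear_combination hdist - (Q' 0 - P 0 + t * (P 0 - A 0)) * hu0
          - (Q' 1 - P 1 + t * (P 1 - A 1)) * hu1
      · funext i
        fin_cases i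
        · show P 0 + t * (P 0 - A 0) = Q' 0
          linear_combination -hu0
        · show P 1 + t * (P 1 - A 1) = Q' 1
          linear_combination -hu1
    by_cases h1 : P 0 - A 0 = 0
    · have h2 : P 1 - A 1 ≠ 0 := by
        intro h2
        apply hn
        rw [nSq, h1, h2]
        ring
      apply build ((Q' 1 - P 1) / (P 1 - A 1))
      · rw [h1, mul_zero]
        have : (P 1 - A 1) * (Q' 0 - P 0) = 0 := by
          rw [h1] at hcol
          linear_combination hcol
        rcases mul_eq_zero.mp this with h | h
        · exact absurd h h2
        · exact h
      · field_simp
    · apply build ((Q' 0 - P 0) / (P 0 - A 0))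
      · field_simp
      · rw [div_mul_eq_mul_div, eq_div_iff h1]
        linear_combination -hcol
  · rintro ⟨⟨t, P⟩, ⟨hPf, hE⟩, rfl⟩
    have hn : eval P (nPoly A) ≠ 0 := by
      intro h
      rw [h, zero_mul] at hE
      exact (pow_ne_zero 2 hd) hE.symm
    have hE' : ((P 0 - A 0) ^ 2 + (P 1 - A 1) ^ 2) * t ^ 2 = d ^ 2 := by
      rw [← eval_nPoly A P]; exact hE
    refine ⟨(phiMap A (t, P), P, (nSq A P)⁻¹), ⟨hPf, ?_, ?_, ?_⟩, rfl⟩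
    · show (P 0 + t * (P 0 - A 0) - P 0) ^ 2 + (P 1 + t * (P 1 - A 1) - P 1) ^ 2 = d ^ 2
      linear_combination hE'
    · show (P 1 - A 1) * (P 0 + t * (P 0 - A 0) - P 0)
        - (P 0 - A 0) * (P 1 + t * (P 1 - A 1) - P 1) = 0
      ring
    · show (nSq A P)⁻¹ * nSq A P = 1
      apply inv_mul_cancel₀
      rw [nSq_eq_eval]
      exact hn

end ConchoidAux

set_option maxHeartbeats 1000000
set_option synthInstance.maxHeartbeats 400000

theorem stmt10 {K : Type*} [Field K] [IsAlgClosed K] [CharZero K]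
    (f : MvPolynomial (Fin 2) K) (hf : Irreducible f)
    (A : Fin 2 → K) (d : K) (hd : d ≠ 0)
    (h0 : (nonIso (curveOf f) A).Nonempty)
    (hC : curveOf f ≠ circleAt A d) :
    ∃ T₁ T₂ : Set (Fin 2 → K),
      IsIrreducible T₁ ∧ IsClosed T₁ ∧ IsIrreducible T₂ ∧ IsClosed T₂ ∧
      conchoid (curveOf f) A d = T₁ ∪ T₂ := by
  classical
  have hfp : Prime f := UniqueFactorizationMonoid.irreducible_iff_prime.mp hf
  obtain ⟨P0, hP0C, hP0n⟩ := h0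
  have hfn : ¬ f ∣ nPoly A := by
    rintro ⟨c, hc⟩
    apply hP0n
    rw [nSq_eq_eval, hc, map_mul, hP0C, zero_mul]
  set I0 : Ideal (MvPolynomial (Fin 2) K) := Ideal.span {f} with hI0def
  haveI hI0 : I0.IsPrime := (Ideal.span_singleton_prime hfp.ne_zero).mpr hfp
  haveI hdom : IsDomain (MvPolynomial (Fin 2) K ⧸ I0) := Ideal.Quotient.isDomain I0
  set ρ : MvPolynomial (Fin 2) K →+* FractionRing (MvPolynomial (Fin 2) K ⧸ I0) :=
    (algebraMap (MvPolynomial (Fin 2) K ⧸ I0) (FractionRing (MvPolynomial (Fin 2) K ⧸ I0))).comp (Ideal.Quotient.mk I0) with hρdef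
  have hker : ∀ p, ρ p = 0 ↔ f ∣ p := by
    intro p
    rw [hρdef, RingHom.comp_apply,
      map_eq_zero_iff _ (IsFractionRing.injective (MvPolynomial (Fin 2) K ⧸ I0) (FractionRing (MvPolynomial (Fin 2) K ⧸ I0))),
      Ideal.Quotient.eq_zero_iff_mem, hI0def, Ideal.mem_span_singleton]
  set S : Set (Fin 2 → K) := (fun q => q.1) '' Inc (curveOf f) A d with hSdef
  have hvan : ∀ p : MvPolynomial (Fin 2) K,
      p ∈ vanishingIdeal K S ↔ (Gq A d).map ρ ∣ ((Phi A) p).map ρ := by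
    intro p
    rw [hSdef, image_eq hd, mem_vanishingIdeal_iff, Set.forall_mem_image,
      ← main_dvd ρ hfp hker hd hfn (Phi A p)]
    exact forall₂_congr fun z hz => by rw [ev2_Phi, aeval_eq_eval]
  set Ψ : MvPolynomial (Fin 2) K →+* Polynomial (FractionRing (MvPolynomial (Fin 2) K ⧸ I0)) := (Polynomial.mapRingHom ρ).comp (Phi A)
    with hΨdef
  have hΨeq : ∀ p, Ψ p = ((Phi A) p).map ρ := fun p => rfl
  have hconch : conchoid (curveOf f) A d = zeroLocus K (vanishingIdeal K S) := by
    rw [show conchoid (curveOf f) A d = zarClosure K 2 S from rfl, zar_closure_eq]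
  set ν := ρ (nPoly A) with hνdef
  have hν : ν ≠ 0 := fun hz => hfn ((hker _).mp hz)
  set e2 := ρ (C (d ^ 2)) with he2def
  have hCd2 : (C (d ^ 2) : MvPolynomial (Fin 2) K) = C d ^ 2 := by rw [map_pow]
  have hGmap : (Gq A d).map ρ = Polynomial.C ν * Polynomial.X ^ 2 - Polynomial.C e2 := by
    simp [Gq, he2def, hCd2, hνdef]
  have hGdeg : ((Gq A d).map ρ).natDegree = 2 := by
    rw [hGmap, Polynomial.natDegree_sub_C, Polynomial.natDegree_C_mul hν,
      Polynomial.natDegree_X_pow]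
  have hGne : (Gq A d).map ρ ≠ 0 := fun hz => by simp [hz] at hGdeg
  have he2 : e2 ≠ 0 := by
    intro h
    obtain ⟨c, hc⟩ := (hker _).mp h
    have := congrArg (eval P0) hc
    rw [map_mul, hP0C, zero_mul, eval_C] at this
    exact (pow_ne_zero 2 hd) this
  by_cases hsq : ∃ τ : FractionRing (MvPolynomial (Fin 2) K ⧸ I0), ν * τ ^ 2 = e2
  · -- reducible case: two components
    obtain ⟨τ, hτ⟩ := hsq
    have hτ0 : τ ≠ 0 := by
      intro h
      rw [h] at hτ
      simp at hτ
      exact he2 hτ.symm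
    have hCe : Polynomial.C e2 = Polynomial.C ν * Polynomial.C τ ^ 2 := by
      rw [← hτ, map_mul, map_pow]
    have hfactor : (Gq A d).map ρ =
        Polynomial.C ν * ((Polynomial.X - Polynomial.C τ) * (Polynomial.X - Polynomial.C (-τ))) := by
      rw [hGmap, hCe, map_neg]
      ring
    have h2F : (2 : FractionRing (MvPolynomial (Fin 2) K ⧸ I0)) ≠ 0 := by
      intro h2
      have hρ2 : ρ 2 = 0 := by rw [map_ofNat]; exact_mod_cast h2
      obtain ⟨c, hc⟩ := (hker _).mp hρ2
      have := congrArg (eval P0) hc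
      rw [map_mul, hP0C, zero_mul, map_ofNat] at this
      exact two_ne_zero this
    have hsplit : ∀ w : Polynomial (FractionRing (MvPolynomial (Fin 2) K ⧸ I0)), (Gq A d).map ρ ∣ w ↔
        (Polynomial.X - Polynomial.C τ) ∣ w ∧ (Polynomial.X - Polynomial.C (-τ)) ∣ w := by
      intro w
      constructor
      · intro hw
        constructor
        · exact dvd_trans ⟨Polynomial.C ν * (Polynomial.X - Polynomial.C (-τ)),
            by rw [hfactor]; ring⟩ hw
        · exact dvd_trans ⟨Polynomial.C ν * (Polynomial.X - Polynomial.C τ),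
            by rw [hfactor]; ring⟩ hw
      · rintro ⟨⟨k, hk⟩, h2⟩
        have hpr : Prime (Polynomial.X - Polynomial.C (-τ)) := Polynomial.prime_X_sub_C (-τ)
        have hnd : ¬ (Polynomial.X - Polynomial.C (-τ)) ∣ (Polynomial.X - Polynomial.C τ) := by
          rw [Polynomial.dvd_iff_isRoot]
          intro hroot
          simp only [Polynomial.IsRoot, Polynomial.eval_sub, Polynomial.eval_X,
            Polynomial.eval_C] at hroot
          have h2τ : (2 : FractionRing (MvPolynomial (Fin 2) K ⧸ I0)) * τ = 0 := by linear_combination -hroot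
          rcases mul_eq_zero.mp h2τ with h | h
          exacts [h2F h, hτ0 h]
        have hdk : (Polynomial.X - Polynomial.C (-τ)) ∣ k :=
          (hpr.dvd_or_dvd (by rw [← hk]; exact h2)).resolve_left hnd
        obtain ⟨k', hk'⟩ := hdk
        refine ⟨Polynomial.C ν⁻¹ * k', ?_⟩
        have hone : Polynomial.C ν * Polynomial.C ν⁻¹ = 1 := by
          rw [← map_mul, mul_inv_cancel₀ hν, map_one]
        calc w = (Polynomial.X - Polynomial.C τ) * ((Polynomial.X - Polynomial.C (-τ)) * k') := by
                rw [hk, hk']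
          _ = (Polynomial.C ν * Polynomial.C ν⁻¹) *
                ((Polynomial.X - Polynomial.C τ) * ((Polynomial.X - Polynomial.C (-τ)) * k')) := by
                rw [hone, one_mul]
          _ = (Gq A d).map ρ * (Polynomial.C ν⁻¹ * k') := by
                rw [hfactor]; ring
    set Q1 : Ideal (MvPolynomial (Fin 2) K) :=
      Ideal.comap Ψ (Ideal.span {Polynomial.X - Polynomial.C τ}) with hQ1def
    set Q2 : Ideal (MvPolynomial (Fin 2) K) :=
      Ideal.comap Ψ (Ideal.span {Polynomial.X - Polynomial.C (-τ)}) with hQ2def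
    haveI hs1 := (Ideal.span_singleton_prime (Polynomial.X_sub_C_ne_zero τ)).mpr
      (Polynomial.prime_X_sub_C τ)
    haveI hs2 := (Ideal.span_singleton_prime (Polynomial.X_sub_C_ne_zero (-τ))).mpr
      (Polynomial.prime_X_sub_C (-τ))
    haveI hQ1p : Q1.IsPrime := Ideal.IsPrime.comap Ψ
    haveI hQ2p : Q2.IsPrime := Ideal.IsPrime.comap Ψ
    have hvi : vanishingIdeal K S = Q1 ⊓ Q2 := by
      ext p
      rw [hvan p, hsplit]
      simp only [hQ1def, hQ2def, Ideal.mem_inf, Ideal.mem_comap, Ideal.mem_span_singleton,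
        hΨeq]
    refine ⟨zeroLocus K Q1, zeroLocus K Q2, zar_irr Q1 hQ1p, zar_isClosed_zeroLocus _,
      zar_irr Q2 hQ2p, zar_isClosed_zeroLocus _, ?_⟩
    rw [hconch, hvi, zar_zeroLocus_inf]
  · -- irreducible case: one component
    push_neg at hsq
    have hGprime : Prime ((Gq A d).map ρ) := by
      rw [hGmap]
      exact quad_prime hν hsq
    set Q1 : Ideal (MvPolynomial (Fin 2) K) :=
      Ideal.comap Ψ (Ideal.span {(Gq A d).map ρ}) with hQ1def
    haveI hs1 := (Ideal.span_singleton_prime hGne).mpr hGprime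
    haveI hQ1p : Q1.IsPrime := Ideal.IsPrime.comap Ψ
    have hvi : vanishingIdeal K S = Q1 := by
      ext p
      rw [hvan p]
      simp only [hQ1def, Ideal.mem_comap, Ideal.mem_span_singleton, hΨeq]
    refine ⟨zeroLocus K Q1, zeroLocus K Q1, zar_irr Q1 hQ1p, zar_isClosed_zeroLocus _,
      zar_irr Q1 hQ1p, zar_isClosed_zeroLocus _, ?_⟩
    rw [hconch, hvi, Set.union_self]
end
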